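/- (Nonlinear consensus under accumulated-graph connectivity, trajectory form of the paper's main theorem.) Let n ≥ 1 and let A : [0,∞) × ℝⁿ → ℝ^{n×n} be continuous and uniformly bounded, such that for every (t,y), A(t,y)_{ij} ≥ 0 for all i ≠ j and Σ_j A(t,y)_{ij} = 0 for every row i. Let x : [0,∞) → ℝⁿ be differentiable with x′(t) = A(t, x(t))·x(t) for all t ≥ 0. Suppose there exist a strictly increasing sequence (t_k)_{k≥1} with t_k → ∞ and sup_k (t_{k+1} − t_k) < ∞, an index ℓ and δ > 0 such that ∫_{t_k}^{t_{k+1}} A(s, x(s))_{iℓ} ds ≥ δ for every i ≠ ℓ and every k ≥ 1. Then there exist constants k₀, λ > 0 such that max_{i,j} |x_i(t) − x_j(t)| ≤ k₀·e^{−λt}·max_{i,j} |x_i(0) − x_j(0)| for all t ≥ 0. -/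

import Mathlib

lemma hasDerivAt_posPartSq (u : ℝ) :
    HasDerivAt (fun v : ℝ => max v 0 ^ 2) (2 * max u 0) u := by
  rcases lt_trichotomy u 0 with h | h | h
  · have hev : (fun v : ℝ => max v 0 ^ 2) =ᶠ[nhds u] fun _ => (0 : ℝ) := by
      filter_upwards [Iio_mem_nhds h] with v hv
      have : v < 0 := hv
      simp [max_eq_right this.le]
    have := (hasDerivAt_const u (0 : ℝ)).congr_of_eventuallyEq hev
    simpa [max_eq_right h.le] using this
  · subst h
    rw [hasDerivAt_iff_isLittleO]
    rw [Asymptotics.isLittleO_iff]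
    intro c hc
    filter_upwards [Metric.ball_mem_nhds (0 : ℝ) hc] with v hv
    have h1 : max v 0 ≤ |v| := by
      rcases le_total v 0 with h' | h' <;> simp [max_eq_right, max_eq_left, h', abs_nonneg, le_abs_self]
    have h2 : max v 0 ^ 2 ≤ |v| * |v| := by
      nlinarith [le_max_right v 0, abs_nonneg v]
    have hv' : |v| < c := by simpa [Real.dist_eq] using hv
    have he : max (0:ℝ) 0 ^ 2 = (0:ℝ) := by simp
    rw [Real.norm_eq_abs, Real.norm_eq_abs]
    have : |max v 0 ^ 2 - max (0:ℝ) 0 ^ 2 - (v - 0) • (2 * max (0:ℝ) 0)| = max v 0 ^ 2 := by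
      simp [abs_of_nonneg, sq_nonneg]
    rw [this]
    calc max v 0 ^ 2 ≤ |v| * |v| := h2
      _ ≤ c * |v| := by nlinarith [abs_nonneg v]
      _ = c * |v - 0| := by simp
  · have hev : (fun v : ℝ => max v 0 ^ 2) =ᶠ[nhds u] fun v : ℝ => v ^ 2 := by
      filter_upwards [Ioi_mem_nhds h] with v hv
      have : (0:ℝ) < v := hv
      simp [max_eq_left this.le]
    have h2 : HasDerivAt (fun v : ℝ => v ^ 2) (2 * u) u := by
      simpa [mul_comm] using hasDerivAt_pow 2 u
    have := h2.congr_of_eventuallyEq hev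
    simpa [max_eq_left h.le] using this

open Finset in
lemma consensus_inv_above {n : ℕ} (B : ℝ → Matrix (Fin n) (Fin n) ℝ) (C a c : ℝ)
    (hC0 : 0 ≤ C)
    (hBC : ∀ t, a ≤ t → ∀ i j, |B t i j| ≤ C)
    (hmetz : ∀ t, a ≤ t → ∀ i j, i ≠ j → 0 ≤ B t i j)
    (hrow : ∀ t, a ≤ t → ∀ i, ∑ j, B t i j = 0)
    (x : ℝ → Fin n → ℝ)
    (hx : ∀ t, a ≤ t → HasDerivAt x ((B t).mulVec (x t)) t)
    (hc : ∀ i, x a i ≤ c) :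
    ∀ t, a ≤ t → ∀ i, x t i ≤ c := by
  classical
  set K : ℝ := 2 * n * C with hK
  set φ : ℝ → ℝ := fun t => ∑ i, max (x t i - c) 0 ^ 2 with hφ
  set φ' : ℝ → ℝ := fun t => ∑ i, 2 * max (x t i - c) 0 * ((B t).mulVec (x t) i) with hφ'
  have hφd : ∀ t, a ≤ t → HasDerivAt φ (φ' t) t := by
    intro t ht
    apply HasDerivAt.fun_sum
    intro i _
    have hxi : HasDerivAt (fun s => x s i) ((B t).mulVec (x t) i) t :=
      hasDerivAt_pi.mp (hx t ht) i
    have hzi : HasDerivAt (fun s => x s i - c) ((B t).mulVec (x t) i) t := hxi.sub_const c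
    exact (hasDerivAt_posPartSq (x t i - c)).comp t hzi
  have hbound : ∀ t, a ≤ t → φ' t ≤ K * φ t := by
    intro t ht
    set z : Fin n → ℝ := fun i => x t i - c with hzdef
    set p : Fin n → ℝ := fun i => max (z i) 0 with hpdef
    have hp0 : ∀ i, 0 ≤ p i := fun i => le_max_right _ _
    have hpz : ∀ i, z i ≤ p i := fun i => le_max_left _ _
    have hppz : ∀ i, p i * z i = p i ^ 2 := by
      intro i
      rcases le_total (z i) 0 with h | h
      · simp [hpdef, max_eq_right h]
      · simp [hpdef, max_eq_left h]; ring
    have hmv : ∀ i, (B t).mulVec (x t) i = ∑ j, B t i j * z j := by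
      intro i
      have h1 : (B t).mulVec (x t) i = ∑ j, B t i j * x t j := by
        simp [Matrix.mulVec, dotProduct]
      have h2 : ∑ j, B t i j * x t j - ∑ j, B t i j * z j = (∑ j, B t i j) * c := by
        rw [← Finset.sum_sub_distrib, Finset.sum_mul]
        apply Finset.sum_congr rfl
        intro j _
        simp [hzdef]; ring
      rw [hrow t ht] at h2
      rw [h1]; linarith
    have hBii : ∀ i, B t i i ≤ 0 := by
      intro i
      have h0 := hrow t ht i
      have h1 : B t i i + ∑ j ∈ Finset.univ.erase i, B t i j = ∑ j, B t i j :=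
        Finset.add_sum_erase _ _ (Finset.mem_univ i)
      have h2 : 0 ≤ ∑ j ∈ Finset.univ.erase i, B t i j :=
        Finset.sum_nonneg fun j hj => hmetz t ht i j (Ne.symm (Finset.mem_erase.mp hj).1)
      linarith
    have key : ∀ i, 2 * p i * ((B t).mulVec (x t) i) ≤ ∑ j, C * (p i ^ 2 + p j ^ 2) := by
      intro i
      rw [hmv i, Finset.mul_sum]
      apply Finset.sum_le_sum
      intro j _
      rcases eq_or_ne j i with rfl | hji
      · have he : 2 * p j * (B t j j * z j) = 2 * B t j j * (p j * z j) := by ring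
        rw [he, hppz j]
        nlinarith [hBii j, sq_nonneg (p j), hp0 j]
      · have hB0 : 0 ≤ B t i j := hmetz t ht i j (Ne.symm hji)
        have hBle : B t i j ≤ C := (abs_le.mp (hBC t ht i j)).2
        have h1 : 2 * p i * (B t i j * z j) ≤ 2 * p i * (B t i j * p j) := by
          apply mul_le_mul_of_nonneg_left _ (by positivity)
          exact mul_le_mul_of_nonneg_left (hpz j) hB0
        have h2 : 2 * p i * (B t i j * p j) ≤ C * (p i ^ 2 + p j ^ 2) := by
          nlinarith [sq_nonneg (p i - p j), hp0 i, hp0 j, mul_nonneg (hp0 i) (hp0 j)]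
        linarith
    have hsum : ∑ i, ∑ j, C * (p i ^ 2 + p j ^ 2) = K * φ t := by
      have h1 : ∀ i : Fin n, ∑ j, C * (p i ^ 2 + p j ^ 2)
          = (n : ℝ) * (C * p i ^ 2) + C * ∑ j, p j ^ 2 := by
        intro i
        rw [show (fun j => C * (p i ^ 2 + p j ^ 2)) = fun j => C * p i ^ 2 + C * p j ^ 2 by
          funext j; ring]
        rw [Finset.sum_add_distrib, Finset.sum_const, Finset.card_univ, ← Finset.mul_sum]
        simp [nsmul_eq_mul]
      rw [Finset.sum_congr rfl fun i _ => h1 i, Finset.sum_add_distrib, Finset.sum_const,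
        Finset.card_univ, ← Finset.mul_sum]
      have hφt : φ t = ∑ i, p i ^ 2 := rfl
      simp only [Fintype.card_fin, nsmul_eq_mul, hφt, hK, ← Finset.mul_sum]
      ring
    calc φ' t ≤ ∑ i, ∑ j, C * (p i ^ 2 + p j ^ 2) := Finset.sum_le_sum fun i _ => key i
      _ = K * φ t := hsum
  set ψ : ℝ → ℝ := fun t => φ t * Real.exp (-(K * t)) with hψ
  have hψd : ∀ t, a ≤ t →
      HasDerivAt ψ (φ' t * Real.exp (-(K * t)) + φ t * (Real.exp (-(K * t)) * -K)) t := by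
    intro t ht
    have hin : HasDerivAt (fun s : ℝ => -(K * s)) (-K) t := by
      simpa using ((hasDerivAt_id t).const_mul K).fun_neg
    exact (hφd t ht).mul hin.exp
  have hanti : AntitoneOn ψ (Set.Ici a) := by
    apply antitoneOn_of_deriv_nonpos (convex_Ici a)
    · exact fun t ht => (hψd t ht).continuousAt.continuousWithinAt
    · intro t ht
      rw [interior_Ici] at ht
      exact (hψd t ht.le).differentiableAt.differentiableWithinAt
    · intro t ht
      rw [interior_Ici] at ht
      rw [(hψd t ht.le).deriv]
      have hb := hbound t ht.le
      have he := (Real.exp_pos (-(K * t))).le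
      nlinarith
  intro t ht i
  have h1 : ψ t ≤ ψ a := hanti Set.self_mem_Ici ht ht
  have hφa : φ a = 0 :=
    Finset.sum_eq_zero fun i _ => by simp [hφ, max_eq_right (sub_nonpos.mpr (hc i))]
  have hψa : ψ a = 0 := by simp [hψ, hφa]
  have hφt0 : φ t ≤ 0 := by
    by_contra hpos
    push_neg at hpos
    have h2 : 0 < φ t * Real.exp (-(K * t)) := mul_pos hpos (Real.exp_pos _)
    rw [hψa] at h1
    simp only [hψ] at h1
    linarith
  have hφtnn : 0 ≤ φ t := Finset.sum_nonneg fun i _ => sq_nonneg _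
  have hterm : max (x t i - c) 0 ^ 2 = 0 :=
    (Finset.sum_eq_zero_iff_of_nonneg fun j _ => sq_nonneg _).mp
      (le_antisymm hφt0 hφtnn) i (Finset.mem_univ i)
  have hmax0 : max (x t i - c) 0 = 0 := pow_eq_zero_iff two_ne_zero |>.mp hterm
  have := le_max_left (x t i - c) 0
  rw [hmax0] at this
  linarith

open Finset in
lemma consensus_exp_lower {n : ℕ} (B : ℝ → Matrix (Fin n) (Fin n) ℝ) (C a : ℝ)
    (hBC : ∀ t, a ≤ t → ∀ i j, |B t i j| ≤ C)
    (hmetz : ∀ t, a ≤ t → ∀ i j, i ≠ j → 0 ≤ B t i j)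
    (x : ℝ → Fin n → ℝ)
    (hx : ∀ t, a ≤ t → HasDerivAt x ((B t).mulVec (x t)) t)
    (hpos : ∀ t, a ≤ t → ∀ j, 0 ≤ x t j) (l : Fin n) :
    ∀ t, a ≤ t → x a l * Real.exp (-(C * (t - a))) ≤ x t l := by
  set g : ℝ → ℝ := fun s => Real.exp (C * s) * x s l with hg
  have hgd : ∀ s, a ≤ s → HasDerivAt g
      (C * Real.exp (C * s) * x s l + Real.exp (C * s) * ((B s).mulVec (x s) l)) s := by
    intro s hs
    have hxl : HasDerivAt (fun u => x u l) ((B s).mulVec (x s) l) s :=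
      hasDerivAt_pi.mp (hx s hs) l
    have hel : HasDerivAt (fun u : ℝ => Real.exp (C * u)) (Real.exp (C * s) * C) s := by
      have : HasDerivAt (fun u : ℝ => C * u) C s := by
        simpa using (hasDerivAt_id s).const_mul C
      exact this.exp
    have := hel.fun_mul hxl
    refine this.congr_deriv ?_
    ring
  have hgmono : MonotoneOn g (Set.Ici a) := by
    apply monotoneOn_of_deriv_nonneg (convex_Ici a)
    · exact fun s hs => (hgd s hs).continuousAt.continuousWithinAt
    · intro s hs
      rw [interior_Ici] at hs
      exact (hgd s hs.le).differentiableAt.differentiableWithinAt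
    · intro s hs
      rw [interior_Ici] at hs
      rw [(hgd s hs.le).deriv]
      have hxnn := hpos s hs.le l
      have hBll : -C ≤ B s l l := (abs_le.mp (hBC s hs.le l l)).1
      have hmv : (B s).mulVec (x s) l = ∑ j, B s l j * x s j := by
        simp [Matrix.mulVec, dotProduct]
      have hsplit : B s l l * x s l + ∑ j ∈ Finset.univ.erase l, B s l j * x s j
          = (B s).mulVec (x s) l := by
        rw [hmv]
        exact Finset.add_sum_erase _ (fun j => B s l j * x s j) (Finset.mem_univ l)
      have herase : 0 ≤ ∑ j ∈ Finset.univ.erase l, B s l j * x s j :=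
        Finset.sum_nonneg fun j hj =>
          mul_nonneg (hmetz s hs.le l j (Ne.symm (Finset.mem_erase.mp hj).1)) (hpos s hs.le j)
      have hexp := (Real.exp_pos (C * s)).le
      nlinarith [mul_nonneg hexp (mul_nonneg (by nlinarith : (0:ℝ) ≤ C + B s l l) hxnn)]
  intro t ht
  have hgle : g a ≤ g t := hgmono Set.self_mem_Ici ht ht
  have key := mul_le_mul_of_nonneg_right hgle (Real.exp_pos (-(C * t))).le
  have e1 : g t * Real.exp (-(C * t)) = x t l := by
    rw [hg]
    rw [Real.exp_neg]
    field_simp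
  have e2 : g a * Real.exp (-(C * t)) = x a l * Real.exp (-(C * (t - a))) := by
    rw [hg]
    have : Real.exp (C * a) * Real.exp (-(C * t)) = Real.exp (-(C * (t - a))) := by
      rw [← Real.exp_add]
      congr 1
      ring
    calc Real.exp (C * a) * x a l * Real.exp (-(C * t))
        = x a l * (Real.exp (C * a) * Real.exp (-(C * t))) := by ring
      _ = x a l * Real.exp (-(C * (t - a))) := by rw [this]
  rw [e1, e2] at key
  exact key

open Finset intervalIntegral MeasureTheory in
lemma consensus_accum {n : ℕ} (B : ℝ → Matrix (Fin n) (Fin n) ℝ) (C a b : ℝ)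
    (hC0 : 0 ≤ C) (hab : a ≤ b)
    (hBC : ∀ t, a ≤ t → ∀ i j, |B t i j| ≤ C)
    (hmetz : ∀ t, a ≤ t → ∀ i j, i ≠ j → 0 ≤ B t i j)
    (x : ℝ → Fin n → ℝ)
    (hx : ∀ t, a ≤ t → HasDerivAt x ((B t).mulVec (x t)) t)
    (hpos : ∀ t, a ≤ t → ∀ j, 0 ≤ x t j)
    (i l : Fin n) (hil : i ≠ l)
    (hlow : ∀ t, a ≤ t → x a l * Real.exp (-(C * (t - a))) ≤ x t l)
    (hBcont : ContinuousOn (fun t => B t i l) (Set.Icc a b)) :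
    x a l * Real.exp (-(C * (b - a))) * ∫ s in a..b, B s i l ≤ x b i := by
  set g : ℝ → ℝ := fun s => Real.exp (C * s) * x s i with hg
  set φ : ℝ → ℝ := fun s => x a l * Real.exp (C * a) * B s i l with hφ
  have hgd : ∀ s, a ≤ s → HasDerivAt g
      (C * Real.exp (C * s) * x s i + Real.exp (C * s) * ((B s).mulVec (x s) i)) s := by
    intro s hs
    have hxi : HasDerivAt (fun u => x u i) ((B s).mulVec (x s) i) s :=
      hasDerivAt_pi.mp (hx s hs) i
    have hel : HasDerivAt (fun u : ℝ => Real.exp (C * u)) (Real.exp (C * s) * C) s := by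
      have : HasDerivAt (fun u : ℝ => C * u) C s := by
        simpa using (hasDerivAt_id s).const_mul C
      exact this.exp
    have := hel.fun_mul hxi
    refine this.congr_deriv ?_
    ring
  have hcontg : ContinuousOn g (Set.Icc a b) := fun s hs =>
    (hgd s hs.1).continuousAt.continuousWithinAt
  have hderiv : ∀ s ∈ Set.Ioo a b, HasDerivWithinAt g
      (C * Real.exp (C * s) * x s i + Real.exp (C * s) * ((B s).mulVec (x s) i)) (Set.Ioi s) s :=
    fun s hs => (hgd s hs.1.le).hasDerivWithinAt
  have hxal : 0 ≤ x a l := hpos a le_rfl l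
  have φint : IntegrableOn φ (Set.Icc a b) :=
    (continuousOn_const.mul hBcont).integrableOn_Icc
  have hφle : ∀ s ∈ Set.Ioo a b, φ s ≤
      C * Real.exp (C * s) * x s i + Real.exp (C * s) * ((B s).mulVec (x s) i) := by
    intro s hs
    have hs' := hs.1.le
    have hxnn := hpos s hs' i
    have hBii : -C ≤ B s i i := (abs_le.mp (hBC s hs' i i)).1
    have hBil : 0 ≤ B s i l := hmetz s hs' i l hil
    have hmv : (B s).mulVec (x s) i = ∑ j, B s i j * x s j := by
      simp [Matrix.mulVec, dotProduct]
    have hsplit : B s i i * x s i + ∑ j ∈ Finset.univ.erase i, B s i j * x s j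
        = (B s).mulVec (x s) i := by
      rw [hmv]
      exact Finset.add_sum_erase _ (fun j => B s i j * x s j) (Finset.mem_univ i)
    have hl_in : l ∈ Finset.univ.erase i := Finset.mem_erase.mpr ⟨Ne.symm hil, Finset.mem_univ l⟩
    have herase : B s i l * x s l ≤ ∑ j ∈ Finset.univ.erase i, B s i j * x s j :=
      Finset.single_le_sum (fun j hj =>
        mul_nonneg (hmetz s hs' i j (Ne.symm (Finset.mem_erase.mp hj).1)) (hpos s hs' j)) hl_in
    have hxl_low : x a l * Real.exp (-(C * (s - a))) ≤ x s l := hlow s hs'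
    have h1 : B s i l * (x a l * Real.exp (-(C * (s - a)))) ≤ B s i l * x s l :=
      mul_le_mul_of_nonneg_left hxl_low hBil
    have hexp := (Real.exp_pos (C * s)).le
    have heq : Real.exp (C * s) * Real.exp (-(C * (s - a))) = Real.exp (C * a) := by
      rw [← Real.exp_add]
      congr 1
      ring
    have h2 : φ s = Real.exp (C * s) * (B s i l * (x a l * Real.exp (-(C * (s - a))))) := by
      rw [hφ]
      calc x a l * Real.exp (C * a) * B s i l
          = (Real.exp (C * s) * Real.exp (-(C * (s - a)))) * (B s i l * x a l) := by
            rw [heq]; ring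
        _ = Real.exp (C * s) * (B s i l * (x a l * Real.exp (-(C * (s - a))))) := by ring
    rw [h2]
    have h3 : Real.exp (C * s) * (B s i l * (x a l * Real.exp (-(C * (s - a)))))
        ≤ Real.exp (C * s) * (B s i l * x s l) :=
      mul_le_mul_of_nonneg_left h1 hexp
    have h4 : 0 ≤ C * Real.exp (C * s) * x s i + Real.exp (C * s) * (B s i i * x s i) := by
      nlinarith [mul_nonneg (by linarith : (0:ℝ) ≤ C + B s i i) (mul_nonneg hexp hxnn)]
    have h5 := mul_le_mul_of_nonneg_left (le_trans h1 herase) hexp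
    rw [← hsplit]
    nlinarith [h5, h4]
  have hmain : (∫ s in a..b, φ s) ≤ g b - g a :=
    intervalIntegral.integral_le_sub_of_hasDeriv_right_of_le hab hcontg hderiv φint hφle
  have hφint : (∫ s in a..b, φ s) = x a l * Real.exp (C * a) * ∫ s in a..b, B s i l := by
    rw [hφ]
    exact intervalIntegral.integral_const_mul _ _
  have hga : 0 ≤ g a := mul_nonneg (Real.exp_pos _).le (hpos a le_rfl i)
  have key : x a l * Real.exp (C * a) * (∫ s in a..b, B s i l) ≤ g b := by
    rw [← hφint]; linarith
  have key2 := mul_le_mul_of_nonneg_right key (Real.exp_pos (-(C * b))).le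
  have e1 : g b * Real.exp (-(C * b)) = x b i := by
    rw [hg, Real.exp_neg]
    field_simp
  have e2 : x a l * Real.exp (C * a) * (∫ s in a..b, B s i l) * Real.exp (-(C * b))
      = x a l * Real.exp (-(C * (b - a))) * ∫ s in a..b, B s i l := by
    have : Real.exp (C * a) * Real.exp (-(C * b)) = Real.exp (-(C * (b - a))) := by
      rw [← Real.exp_add]
      congr 1
      ring
    calc x a l * Real.exp (C * a) * (∫ s in a..b, B s i l) * Real.exp (-(C * b))
        = x a l * (Real.exp (C * a) * Real.exp (-(C * b))) * ∫ s in a..b, B s i l := by ring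
      _ = x a l * Real.exp (-(C * (b - a))) * ∫ s in a..b, B s i l := by rw [this]
  rw [e1, e2] at key2
  exact key2

set_option maxHeartbeats 1000000 in
theorem stmt15 {n : ℕ} (hn : 1 ≤ n) (A : ℝ → (Fin n → ℝ) → Matrix (Fin n) (Fin n) ℝ)
    (hcont : ContinuousOn (fun p : ℝ × (Fin n → ℝ) => A p.1 p.2) (Set.Ici 0 ×ˢ Set.univ))
    (hbdd : ∃ M : ℝ, ∀ t, 0 ≤ t → ∀ y i j, |A t y i j| ≤ M)
    (hmetzler : ∀ t, 0 ≤ t → ∀ y, ∀ i j, i ≠ j → 0 ≤ A t y i j)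
    (hrow : ∀ t, 0 ≤ t → ∀ y i, ∑ j, A t y i j = 0)
    (x : ℝ → Fin n → ℝ)
    (hx : ∀ t, 0 ≤ t → HasDerivAt x ((A t (x t)).mulVec (x t)) t)
    (tk : ℕ → ℝ) (htk0 : ∀ k, 0 ≤ tk k) (htkmono : StrictMono tk)
    (htktop : Filter.Tendsto tk Filter.atTop Filter.atTop)
    (hgap : ∃ S : ℝ, ∀ k, tk (k + 1) - tk k ≤ S)
    (l : Fin n) (δ : ℝ) (hδ : 0 < δ)
    (hconn : ∀ k : ℕ, 1 ≤ k → ∀ i, i ≠ l →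
      δ ≤ ∫ s in tk k..tk (k + 1), A s (x s) i l) :
    ∃ k₀ lam : ℝ, 0 < k₀ ∧ 0 < lam ∧
      ∀ t, 0 ≤ t → ∀ i j,
        |x t i - x t j| ≤
          k₀ * Real.exp (-lam * t) * ⨆ p : Fin n × Fin n, |x 0 p.1 - x 0 p.2| := by
  classical
  haveI : NeZero n := ⟨by omega⟩
  obtain ⟨M0, hM0⟩ := hbdd
  set C : ℝ := max M0 0 with hCdef
  have hC0 : 0 ≤ C := le_max_right _ _
  set B : ℝ → Matrix (Fin n) (Fin n) ℝ := fun t => A t (x t) with hB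
  have hBC : ∀ t, 0 ≤ t → ∀ i j, |B t i j| ≤ C :=
    fun t ht i j => (hM0 t ht (x t) i j).trans (le_max_left _ _)
  have hBmetz : ∀ t, 0 ≤ t → ∀ i j : Fin n, i ≠ j → 0 ≤ B t i j :=
    fun t ht => hmetzler t ht (x t)
  have hBrow : ∀ t, 0 ≤ t → ∀ i, ∑ j, B t i j = 0 := fun t ht => hrow t ht (x t)
  have hxB : ∀ t, 0 ≤ t → HasDerivAt x ((B t).mulVec (x t)) t := hx
  have hxc : ContinuousOn x (Set.Ici 0) :=
    fun t ht => (hx t ht).continuousAt.continuousWithinAt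
  have hBcont : ∀ i j : Fin n, ContinuousOn (fun t => B t i j) (Set.Ici 0) := by
    intro i j
    have h1 : ContinuousOn (fun t : ℝ => (t, x t)) (Set.Ici 0) :=
      (continuousOn_id).prodMk hxc
    have h2 : ContinuousOn (fun t : ℝ => A t (x t)) (Set.Ici 0) :=
      hcont.comp h1 (fun t ht => ⟨ht, Set.mem_univ _⟩)
    exact ((continuous_apply j).comp (continuous_apply i)).comp_continuousOn h2
  have hne : (Finset.univ : Finset (Fin n)).Nonempty := Finset.univ_nonempty
  set Mx : ℝ → ℝ := fun t => Finset.univ.sup' hne (x t) with hMxdef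
  set mx : ℝ → ℝ := fun t => Finset.univ.inf' hne (x t) with hmxdef
  set D : ℝ → ℝ := fun t => Mx t - mx t with hDdef
  -- invariance of the interval
  have hub : ∀ a, 0 ≤ a → ∀ t, a ≤ t → ∀ i, x t i ≤ Mx a := by
    intro a ha0
    exact consensus_inv_above B C a (Mx a) hC0
      (fun t ht => hBC t (ha0.trans ht)) (fun t ht => hBmetz t (ha0.trans ht))
      (fun t ht => hBrow t (ha0.trans ht)) x (fun t ht => hxB t (ha0.trans ht))
      (fun i => Finset.le_sup' (x a) (Finset.mem_univ i))
  have hlb : ∀ a, 0 ≤ a → ∀ t, a ≤ t → ∀ i, mx a ≤ x t i := by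
    intro a ha0 t ht i
    have hy : ∀ s, a ≤ s → HasDerivAt (fun u => -(x u)) ((B s).mulVec (-(x s))) s := by
      intro s hs
      simpa [Matrix.mulVec_neg] using (hxB s (ha0.trans hs)).fun_neg
    have := consensus_inv_above B C a (-(mx a)) hC0
      (fun t ht => hBC t (ha0.trans ht)) (fun t ht => hBmetz t (ha0.trans ht))
      (fun t ht => hBrow t (ha0.trans ht)) (fun u => -(x u)) hy
      (fun i => neg_le_neg (Finset.inf'_le (x a) (Finset.mem_univ i))) t ht i
    simpa using neg_le_neg this
  have hMxle : ∀ a, 0 ≤ a → ∀ t, a ≤ t → Mx t ≤ Mx a := by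
    intro a ha0 t ht
    exact Finset.sup'_le hne (x t) fun i _ => hub a ha0 t ht i
  have hmxge : ∀ a, 0 ≤ a → ∀ t, a ≤ t → mx a ≤ mx t := by
    intro a ha0 t ht
    exact Finset.le_inf' hne (x t) fun i _ => hlb a ha0 t ht i
  have hDmono : ∀ a, 0 ≤ a → ∀ t, a ≤ t → D t ≤ D a := by
    intro a ha0 t ht
    have := hMxle a ha0 t ht
    have := hmxge a ha0 t ht
    simp only [hDdef]
    linarith
  have hmM : ∀ t, mx t ≤ Mx t := fun t =>
    le_trans (Finset.inf'_le (x t) (Finset.mem_univ ⟨0, by omega⟩))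
      (Finset.le_sup' (x t) (Finset.mem_univ ⟨0, by omega⟩))
  have hD0 : ∀ t, 0 ≤ D t := fun t => sub_nonneg.mpr (hmM t)
  obtain ⟨S, hS⟩ := hgap
  have hSpos : 0 < S := lt_of_lt_of_le (sub_pos.mpr (htkmono (by norm_num : (0:ℕ) < 1))) (hS 0)
  set η : ℝ := min δ 1 * Real.exp (-(C * S)) with hηdef
  have hmin0 : 0 < min δ 1 := lt_min hδ one_pos
  have hη0 : 0 < η := mul_pos hmin0 (Real.exp_pos _)
  have hη1 : η ≤ 1 := by
    have h1 : min δ 1 ≤ 1 := min_le_right _ _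
    have h2 : Real.exp (-(C * S)) ≤ 1 := by
      rw [Real.exp_le_one_iff]
      nlinarith
    nlinarith [Real.exp_pos (-(C * S))]
  -- contraction over one connectivity window
  have contract : ∀ k : ℕ, 1 ≤ k → D (tk (k + 1)) ≤ (1 - η) * D (tk k) := by
    intro k hk
    set a : ℝ := tk k with hadef
    set b : ℝ := tk (k + 1) with hbdef
    have ha0 : 0 ≤ a := htk0 k
    have hab : a ≤ b := (htkmono (lt_add_one k)).le
    have hb0 : 0 ≤ b := ha0.trans hab
    have hbS : b - a ≤ S := hS k
    have hexpS : Real.exp (-(C * S)) ≤ Real.exp (-(C * (b - a))) :=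
      Real.exp_le_exp.mpr (by nlinarith)
    -- generic one-sided estimate
    have hside : ∀ (y : ℝ → Fin n → ℝ),
        (∀ s, a ≤ s → HasDerivAt y ((B s).mulVec (y s)) s) →
        (∀ s, a ≤ s → ∀ j, 0 ≤ y s j) →
        ∀ i, η * y a l ≤ y b i := by
      intro y hyd hypos i
      have hylow : ∀ s, a ≤ s → y a l * Real.exp (-(C * (s - a))) ≤ y s l :=
        consensus_exp_lower B C a (fun s hs => hBC s (ha0.trans hs))
          (fun s hs => hBmetz s (ha0.trans hs)) y hyd hypos l
      have hyal : 0 ≤ y a l := hypos a le_rfl l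
      rcases eq_or_ne i l with heq | hil
      · rw [heq]
        have h1 := hylow b hab
        have h2 : η * y a l ≤ y a l * Real.exp (-(C * (b - a))) := by
          have e5 : η * y a l = min δ 1 * (Real.exp (-(C * S)) * y a l) := by
            rw [hηdef]; ring
          have e6 : min δ 1 * (Real.exp (-(C * S)) * y a l)
              ≤ 1 * (Real.exp (-(C * S)) * y a l) :=
            mul_le_mul_of_nonneg_right (min_le_right δ 1)
              (mul_nonneg (Real.exp_pos _).le hyal)
          have e7 : Real.exp (-(C * S)) * y a l ≤ Real.exp (-(C * (b - a))) * y a l :=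
            mul_le_mul_of_nonneg_right hexpS hyal
          nlinarith
        linarith
      · have hint := consensus_accum B C a b hC0 hab
          (fun s hs => hBC s (ha0.trans hs)) (fun s hs => hBmetz s (ha0.trans hs))
          y hyd hypos i l hil hylow
          ((hBcont i l).mono (fun s hs => ha0.trans hs.1))
        have hδint : δ ≤ ∫ s in a..b, B s i l := by
          simp only [hadef, hbdef, hB]
          exact hconn k hk i hil
        have hcoef : 0 ≤ y a l * Real.exp (-(C * (b - a))) :=
          mul_nonneg hyal (Real.exp_pos _).le
        have h1 : y a l * Real.exp (-(C * (b - a))) * min δ 1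
            ≤ y a l * Real.exp (-(C * (b - a))) * ∫ s in a..b, B s i l := by
          apply mul_le_mul_of_nonneg_left _ hcoef
          exact le_trans (min_le_left δ 1) hδint
        have h2 : η * y a l ≤ y a l * Real.exp (-(C * (b - a))) * min δ 1 := by
          have h3 : y a l * Real.exp (-(C * S)) * min δ 1
              ≤ y a l * Real.exp (-(C * (b - a))) * min δ 1 := by
            apply mul_le_mul_of_nonneg_right _ hmin0.le
            exact mul_le_mul_of_nonneg_left hexpS hyal
          have h4 : η * y a l = y a l * Real.exp (-(C * S)) * min δ 1 := by
            rw [hηdef]; ring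
          linarith
        linarith [hint]
    -- upper side : e t i = Mx a - x t i
    have hed : ∀ s, a ≤ s → HasDerivAt (fun u => (fun i => Mx a - x u i))
        ((B s).mulVec (fun i => Mx a - x s i)) s := by
      intro s hs
      have hs0 : (0:ℝ) ≤ s := ha0.trans hs
      apply hasDerivAt_pi.mpr
      intro i
      have hxi : HasDerivAt (fun u => x u i) ((B s).mulVec (x s) i) s :=
        hasDerivAt_pi.mp (hxB s hs0) i
      have h1 : HasDerivAt (fun u => Mx a - x u i) (-((B s).mulVec (x s) i)) s :=
        hxi.const_sub (Mx a)
      have h2 : (B s).mulVec (fun i => Mx a - x s i) i = -((B s).mulVec (x s) i) := by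
        have e1 : (B s).mulVec (fun i => Mx a - x s i) i = ∑ j, B s i j * (Mx a - x s j) := by
          simp [Matrix.mulVec, dotProduct]
        have e2 : (B s).mulVec (x s) i = ∑ j, B s i j * x s j := by
          simp [Matrix.mulVec, dotProduct]
        have e3 : ∑ j, B s i j * (Mx a - x s j)
            = (∑ j, B s i j) * Mx a - ∑ j, B s i j * x s j := by
          rw [Finset.sum_mul, ← Finset.sum_sub_distrib]
          exact Finset.sum_congr rfl fun j _ => by ring
        rw [e1, e3, hBrow s hs0, e2]
        ring
      rw [h2]
      exact h1
    have hepos : ∀ s, a ≤ s → ∀ j, 0 ≤ (fun i => Mx a - x s i) j := by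
      intro s hs j
      simp only
      have := hub a ha0 s hs j
      linarith
    have hupper : ∀ i, η * (Mx a - x a l) ≤ Mx a - x b i :=
      fun i => hside (fun u => (fun i => Mx a - x u i)) hed hepos i
    -- lower side : f t i = x t i - mx a
    have hfd : ∀ s, a ≤ s → HasDerivAt (fun u => (fun i => x u i - mx a))
        ((B s).mulVec (fun i => x s i - mx a)) s := by
      intro s hs
      have hs0 : (0:ℝ) ≤ s := ha0.trans hs
      apply hasDerivAt_pi.mpr
      intro i
      have hxi : HasDerivAt (fun u => x u i) ((B s).mulVec (x s) i) s :=
        hasDerivAt_pi.mp (hxB s hs0) i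
      have h1 : HasDerivAt (fun u => x u i - mx a) ((B s).mulVec (x s) i) s :=
        hxi.sub_const (mx a)
      have h2 : (B s).mulVec (fun i => x s i - mx a) i = (B s).mulVec (x s) i := by
        have e1 : (B s).mulVec (fun i => x s i - mx a) i = ∑ j, B s i j * (x s j - mx a) := by
          simp [Matrix.mulVec, dotProduct]
        have e2 : (B s).mulVec (x s) i = ∑ j, B s i j * x s j := by
          simp [Matrix.mulVec, dotProduct]
        have e3 : ∑ j, B s i j * (x s j - mx a)
            = ∑ j, B s i j * x s j - (∑ j, B s i j) * mx a := by
          rw [Finset.sum_mul, ← Finset.sum_sub_distrib]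
          exact Finset.sum_congr rfl fun j _ => by ring
        rw [e1, e3, hBrow s hs0, e2]
        ring
      rw [h2]
      exact h1
    have hfpos : ∀ s, a ≤ s → ∀ j, 0 ≤ (fun i => x s i - mx a) j := by
      intro s hs j
      simp only
      have := hlb a ha0 s hs j
      linarith
    have hlower : ∀ i, η * (x a l - mx a) ≤ x b i - mx a :=
      fun i => hside (fun u => (fun i => x u i - mx a)) hfd hfpos i
    -- combine
    have hMb : Mx b ≤ Mx a - η * (Mx a - x a l) :=
      Finset.sup'_le hne (x b) fun i _ => by have := hupper i; linarith
    have hmb : mx a + η * (x a l - mx a) ≤ mx b :=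
      Finset.le_inf' hne (x b) fun i _ => by have := hlower i; linarith
    simp only [hDdef]
    nlinarith [hMb, hmb]
  -- iterate the contraction
  set q : ℝ := max (1 - η) (1/2) with hqdef
  have hq0 : 0 < q := lt_of_lt_of_le (by norm_num) (le_max_right _ _)
  have hq1 : q < 1 := max_lt (by linarith) (by norm_num)
  have contract' : ∀ k : ℕ, 1 ≤ k → D (tk (k + 1)) ≤ q * D (tk k) := by
    intro k hk
    refine (contract k hk).trans ?_
    exact mul_le_mul_of_nonneg_right (le_max_left _ _) (hD0 _)
  have hDk : ∀ k : ℕ, 1 ≤ k → D (tk k) ≤ q ^ (k - 1) * D (tk 1) := by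
    intro k hk
    induction k with
    | zero => omega
    | succ m ih =>
      rcases Nat.eq_or_lt_of_le hk with h1 | h1
      · simp [← h1]
      · have hm : 1 ≤ m := by omega
        have := contract' m hm
        have h2 := ih hm
        have h3 : q ^ (m + 1 - 1) = q * q ^ (m - 1) := by
          rw [Nat.add_sub_cancel, ← pow_succ']
          congr 1
          omega
        rw [h3]
        calc D (tk (m + 1)) ≤ q * D (tk m) := this
          _ ≤ q * (q ^ (m - 1) * D (tk 1)) := mul_le_mul_of_nonneg_left h2 hq0.le
          _ = q * q ^ (m - 1) * D (tk 1) := by ring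
  have htkb : ∀ k : ℕ, tk (k + 1) ≤ tk 1 + k * S := by
    intro k
    induction k with
    | zero => simp
    | succ m ih =>
      have := hS (m + 1)
      push_cast
      push_cast at ih
      linarith
  set lam : ℝ := -Real.log q / S with hlamdef
  have hlogq : Real.log q < 0 := Real.log_neg hq0 hq1
  have hlam0 : 0 < lam := div_pos (by linarith) hSpos
  have hlamS : Real.log q = -(lam * S) := by
    rw [hlamdef]
    field_simp
  refine ⟨Real.exp (lam * (tk 1 + S)), lam, Real.exp_pos _, hlam0, ?_⟩
  intro t ht i j
  -- reduce to diameter bound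
  have habs : |x t i - x t j| ≤ D t := by
    have h1 : x t i ≤ Mx t := Finset.le_sup' (x t) (Finset.mem_univ i)
    have h2 : mx t ≤ x t j := Finset.inf'_le (x t) (Finset.mem_univ j)
    have h3 : x t j ≤ Mx t := Finset.le_sup' (x t) (Finset.mem_univ j)
    have h4 : mx t ≤ x t i := Finset.inf'_le (x t) (Finset.mem_univ i)
    rw [abs_le]
    constructor <;> simp only [hDdef] <;> linarith
  have hD0sup : D 0 ≤ ⨆ p : Fin n × Fin n, |x 0 p.1 - x 0 p.2| := by
    obtain ⟨i0, _, hi0⟩ := Finset.exists_mem_eq_sup' hne (x 0)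
    obtain ⟨j0, _, hj0⟩ := Finset.exists_mem_eq_inf' hne (x 0)
    have hb : BddAbove (Set.range fun p : Fin n × Fin n => |x 0 p.1 - x 0 p.2|) :=
      Set.Finite.bddAbove (Set.finite_range _)
    have h1 : D 0 = x 0 i0 - x 0 j0 := by
      simp only [hDdef, hMxdef, hmxdef, hi0, hj0]
    have h2 : x 0 i0 - x 0 j0 ≤ |x 0 i0 - x 0 j0| := le_abs_self _
    have h3 : |x 0 i0 - x 0 j0| ≤ ⨆ p : Fin n × Fin n, |x 0 p.1 - x 0 p.2| :=
      le_ciSup hb (i0, j0)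
    linarith
  -- main diameter decay estimate
  have hDt : D t ≤ Real.exp (lam * (tk 1 + S)) * Real.exp (-lam * t) * D 0 := by
    rcases le_or_gt t (tk 1) with hcase | hcase
    · have h1 : D t ≤ D 0 := hDmono 0 le_rfl t ht
      have h2 : (1:ℝ) ≤ Real.exp (lam * (tk 1 + S)) * Real.exp (-lam * t) := by
        rw [← Real.exp_add]
        rw [show (1:ℝ) = Real.exp 0 by simp]
        apply Real.exp_le_exp.mpr
        nlinarith
      nlinarith [hD0 0, hD0 t]
    · -- find the window containing t
      have hex : ∃ m : ℕ, t < tk m := by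
        obtain ⟨m, hm⟩ := (htktop.eventually_gt_atTop t).exists
        exact ⟨m, hm⟩
      set K := Nat.find hex with hKdef
      have hKspec : t < tk K := Nat.find_spec hex
      have hK2 : 2 ≤ K := by
        by_contra hcon
        push_neg at hcon
        interval_cases K
        · have := htk0 0
          have h1 := hKspec
          have h2 : tk 0 < tk 1 := htkmono (by norm_num)
          linarith
        · linarith [hKspec]
      set k := K - 1 with hkdef
      have hk1 : 1 ≤ k := by omega
      have hkK : k + 1 = K := by omega
      have htkk : tk k ≤ t := by
        by_contra hcon
        push_neg at hcon
        exact Nat.find_min hex (by omega) hcon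
      have htkk1 : t < tk (k + 1) := by rw [hkK]; exact hKspec
      have htka : 0 ≤ tk k := htk0 k
      have hstep1 : D t ≤ D (tk k) := hDmono (tk k) htka t htkk
      have hstep2 : D (tk k) ≤ q ^ (k - 1) * D (tk 1) := hDk k hk1
      have hstep3 : D (tk 1) ≤ D 0 := hDmono 0 le_rfl (tk 1) (htk0 1)
      have hstep4 : q ^ (k - 1) * D (tk 1) ≤ q ^ (k - 1) * D 0 :=
        mul_le_mul_of_nonneg_left hstep3 (pow_nonneg hq0.le _)
      have hpow : q ^ (k - 1) ≤ Real.exp (lam * (tk 1 + S)) * Real.exp (-lam * t) := by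
        have e1 : q ^ (k - 1) = Real.exp (((k:ℝ) - 1) * Real.log q) := by
          rw [← Real.exp_log hq0, ← Real.exp_nat_mul]
          congr 1
          have : ((k - 1 : ℕ) : ℝ) = (k:ℝ) - 1 := by
            have := Nat.cast_sub hk1 (R := ℝ)
            simpa using this
          rw [Real.log_exp]
          rw [this]
        rw [e1, ← Real.exp_add]
        apply Real.exp_le_exp.mpr
        have hbound : t ≤ tk 1 + k * S := le_trans htkk1.le (htkb k)
        rw [hlamS]
        have hk1R : (1:ℝ) ≤ (k:ℝ) := by exact_mod_cast hk1
        nlinarith [hlam0]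
      calc D t ≤ q ^ (k - 1) * D 0 := by linarith
        _ ≤ Real.exp (lam * (tk 1 + S)) * Real.exp (-lam * t) * D 0 :=
          mul_le_mul_of_nonneg_right hpow (hD0 0)
  have hfinal : Real.exp (lam * (tk 1 + S)) * Real.exp (-lam * t) * D 0
      ≤ Real.exp (lam * (tk 1 + S)) * Real.exp (-lam * t) *
        ⨆ p : Fin n × Fin n, |x 0 p.1 - x 0 p.2| :=
    mul_le_mul_of_nonneg_left hD0sup
      (mul_nonneg (Real.exp_pos _).le (Real.exp_pos _).le)
  linarith
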